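/- Let (Z₁,…,Zₙ) be exchangeable random observations with values in X × Y, Y finite. Fix a label y ∈ Y with Prob(Yₙ = y) > 0. Conditionally on the event {Yₙ = y and |{i ≤ n : Yᵢ = y}| = k} for k ≥ 1, suppose the conformity scores of the observations with label y are almost surely distinct. Then the label-conditional p-value P := |{i : Yᵢ = Yₙ, αᵢ ≤ αₙ}| / |{i : Yᵢ = Yₙ}|, computed from an equivariant conformity measure A, is conditionally uniformly distributed on {1/k, 2/k, …, 1} given that event. -/

import Mathlib

open MeasureTheory Finset ProbabilityTheory

private lemma rank_lt_rank' {N : ℕ} (S : Finset (Fin N)) (a : Fin N → ℝ)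
    {i i' : Fin N} (hi' : i' ∈ S) (h : a i < a i') :
    (S.filter (fun m => a m ≤ a i)).card < (S.filter (fun m => a m ≤ a i')).card := by
  apply Finset.card_lt_card
  constructor
  · intro m hm
    simp only [Finset.mem_filter] at hm ⊢
    exact ⟨hm.1, hm.2.trans h.le⟩
  · intro hsub
    have := hsub (Finset.mem_filter.2 ⟨hi', le_refl _⟩)
    simp only [Finset.mem_filter] at this
    exact absurd this.2 (not_le.2 h)

private lemma rank_injOn' {N : ℕ} (S : Finset (Fin N)) (a : Fin N → ℝ)
    (ha : Set.InjOn a ↑S) {i i' : Fin N} (hi : i ∈ S) (hi' : i' ∈ S)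
    (h : (S.filter (fun m => a m ≤ a i)).card = (S.filter (fun m => a m ≤ a i')).card) :
    i = i' := by
  rcases lt_trichotomy (a i) (a i') with hlt | heq | hlt
  · exact absurd h (rank_lt_rank' S a hi' hlt).ne
  · exact ha hi hi' heq
  · exact absurd h.symm (rank_lt_rank' S a hi hlt).ne

private lemma rank_mem_Icc' {N : ℕ} (S : Finset (Fin N)) (a : Fin N → ℝ)
    {i : Fin N} (hi : i ∈ S) :
    (S.filter (fun m => a m ≤ a i)).card ∈ Finset.Icc 1 S.card := by
  rw [Finset.mem_Icc]
  exact ⟨Finset.card_pos.2 ⟨i, Finset.mem_filter.2 ⟨hi, le_refl _⟩⟩,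
    Finset.card_le_card (Finset.filter_subset _ _)⟩

private lemma rank_surj' {N : ℕ} (S : Finset (Fin N)) (a : Fin N → ℝ)
    (ha : Set.InjOn a ↑S) (j : ℕ) (hj1 : 1 ≤ j) (hjk : j ≤ S.card) :
    ∃ i ∈ S, (S.filter (fun m => a m ≤ a i)).card = j := by
  have hsurj := Finset.surj_on_of_inj_on_of_card_le
    (s := S) (t := Finset.Icc 1 S.card)
    (fun i _ => (S.filter (fun m => a m ≤ a i)).card)
    (fun i hi => rank_mem_Icc' S a hi)
    (fun i i' hi hi' h => rank_injOn' S a ha hi hi' h)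
    (by rw [Nat.card_Icc]; omega)
  obtain ⟨i, hi, hij⟩ := hsurj j (Finset.mem_Icc.2 ⟨hj1, hjk⟩)
  exact ⟨i, hi, hij.symm⟩

private lemma measurable_filter_card' {V ι : Type*} [MeasurableSpace V] (S : Finset ι)
    (p : ι → V → Prop) [∀ i, DecidablePred (p i)]
    (hp : ∀ i ∈ S, MeasurableSet {z | p i z}) :
    Measurable fun z => (S.filter (fun i => p i z)).card := by
  have h : (fun z => (S.filter (fun i => p i z)).card)
      = fun z => ∑ i ∈ S, if p i z then 1 else 0 := by
    funext z; rw [Finset.card_filter]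
  rw [h]
  exact Finset.measurable_sum _
    (fun i hi => Measurable.ite (hp i hi) measurable_const measurable_const)

private lemma injOn_comp_perm' {ι β : Type*} (e : Equiv.Perm ι) (f : ι → β) (T : Set ι) :
    Set.InjOn (fun m => f (e m)) (e ⁻¹' T) ↔ Set.InjOn f T := by
  constructor
  · intro h a ha b hb hab
    have h1 : e.symm a ∈ e ⁻¹' T := by simp only [Set.mem_preimage, Equiv.apply_symm_apply]; exact ha
    have h2 : e.symm b ∈ e ⁻¹' T := by simp only [Set.mem_preimage, Equiv.apply_symm_apply]; exact hb
    have h3 : f (e (e.symm a)) = f (e (e.symm b)) := by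
      rw [Equiv.apply_symm_apply, Equiv.apply_symm_apply]; exact hab
    have := h h1 h2 h3
    simpa using congrArg e this
  · intro h a ha b hb hab
    exact e.injective (h ha hb hab)

/-- Let `Z 0, …, Z n` be exchangeable observations in `𝓧 × 𝓨`
(`𝓨` finite), `A` an equivariant conformity measure with scores `α`, and fix a
label `y` with `Prob(Y last = y) > 0`.  Conditionally on the event
`E = {Y last = y and |{i : Y i = y}| = k}` (of positive probability, `k ≥ 1`),
if the scores of the label-`y` observations are a.s. distinct, then the
label-conditional p-value
`P = |{i : Y i = Y last, α i ≤ α last}| / |{i : Y i = Y last}|` is conditionally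
uniform on `{1/k, …, k/k}`. -/
theorem label_conditional_pvalue_conditionally_uniform
    {Ω 𝓧 𝓨 : Type*} [MeasurableSpace Ω] [MeasurableSpace 𝓧]
    [Fintype 𝓨] [DecidableEq 𝓨] [MeasurableSpace 𝓨] [MeasurableSingletonClass 𝓨]
    (μ : Measure Ω) [IsProbabilityMeasure μ] (n : ℕ)
    (Z : Fin (n + 1) → Ω → 𝓧 × 𝓨) (hZmeas : ∀ i, Measurable (Z i))
    (hexch : ∀ π : Equiv.Perm (Fin (n + 1)),
      Measure.map (fun ω => fun i => Z (π i) ω) μ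
        = Measure.map (fun ω => fun i => Z i ω) μ)
    (A : (Fin (n + 1) → 𝓧 × 𝓨) → (Fin (n + 1) → ℝ)) (hAmeas : Measurable A)
    (hequiv : ∀ (π : Equiv.Perm (Fin (n + 1))) (z : Fin (n + 1) → 𝓧 × 𝓨),
      A (fun i => z (π i)) = fun i => A z (π i))
    (α : Fin (n + 1) → Ω → ℝ) (hα : α = fun i ω => A (fun j => Z j ω) i)
    (y : 𝓨) (hy : μ {ω | (Z (Fin.last n) ω).2 = y} ≠ 0)
    (k : ℕ) (hk : 1 ≤ k)
    (E : Set Ω)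
    (hE : E = {ω | (Z (Fin.last n) ω).2 = y
      ∧ (Finset.univ.filter (fun i : Fin (n + 1) => (Z i ω).2 = y)).card = k})
    (hEpos : μ E ≠ 0)
    (hdist : ∀ᵐ ω ∂μ, ω ∈ E →
      Set.InjOn (fun i => α i ω) {i | (Z i ω).2 = y})
    (P : Ω → ℝ)
    (hP : P = fun ω =>
      ((Finset.univ.filter (fun i : Fin (n + 1) =>
          (Z i ω).2 = (Z (Fin.last n) ω).2
            ∧ α i ω ≤ α (Fin.last n) ω)).card : ℝ)
        / ((Finset.univ.filter (fun i : Fin (n + 1) =>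
          (Z i ω).2 = (Z (Fin.last n) ω).2)).card : ℝ)) :
    ∀ j : ℕ, 1 ≤ j → j ≤ k →
      μ[|E] {ω | P ω = (j : ℝ) / (k : ℝ)} = (↑k : ENNReal)⁻¹ := by
  intro j hj1 hjk
  subst hα hP
  -- notation
  set lst : Fin (n + 1) := Fin.last n with hlstdef
  have hZvecMeas : Measurable (fun ω (i : Fin (n + 1)) => Z i ω) :=
    measurable_pi_lambda _ hZmeas
  set ν : Measure (Fin (n + 1) → 𝓧 × 𝓨) := μ.map (fun ω i => Z i ω) with hν
  have : IsProbabilityMeasure ν := Measure.isProbabilityMeasure_map hZvecMeas.aemeasurable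
  -- measurable building blocks
  have hbase : ∀ m : Fin (n + 1),
      MeasurableSet {z : Fin (n + 1) → 𝓧 × 𝓨 | (z m).2 = y} := fun m =>
    (measurable_snd.comp (measurable_pi_apply m)) (measurableSet_singleton y)
  have hAm : ∀ m : Fin (n + 1),
      Measurable (fun z : Fin (n + 1) → 𝓧 × 𝓨 => A z m) :=
    fun m => (measurable_pi_apply m).comp hAmeas
  -- key sets on the data-vector space
  set E' : Set (Fin (n + 1) → 𝓧 × 𝓨) :=
    {z | (z lst).2 = y ∧ (Finset.univ.filter (fun i => (z i).2 = y)).card = k} with hE'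
  set D' : Set (Fin (n + 1) → 𝓧 × 𝓨) :=
    {z | Set.InjOn (A z) {i | (z i).2 = y}} with hD'
  set Pz : Set (Fin (n + 1) → 𝓧 × 𝓨) :=
    {z | ((Finset.univ.filter (fun i : Fin (n + 1) =>
          (z i).2 = (z lst).2 ∧ A z i ≤ A z lst)).card : ℝ)
        / ((Finset.univ.filter (fun i : Fin (n + 1) =>
          (z i).2 = (z lst).2)).card : ℝ) = (j : ℝ) / (k : ℝ)} with hPz
  set C : Finset (Fin (n + 1)) → Set (Fin (n + 1) → 𝓧 × 𝓨) :=
    fun S => {z | ∀ m, ((z m).2 = y ↔ m ∈ S)} with hC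
  set B : Finset (Fin (n + 1)) → Fin (n + 1) → Set (Fin (n + 1) → 𝓧 × 𝓨) :=
    fun S i => (C S ∩ D') ∩ {z | (S.filter (fun m => A z m ≤ A z i)).card = j} with hB
  set 𝒮 : Finset (Finset (Fin (n + 1))) :=
    Finset.univ.filter (fun S => lst ∈ S ∧ S.card = k) with h𝒮
  -- measurability of the sets
  have hCmeas : ∀ S, MeasurableSet (C S) := by
    intro S
    have hCeq : C S = ⋂ m, {z : Fin (n + 1) → 𝓧 × 𝓨 | (z m).2 = y ↔ m ∈ S} := by
      ext z; simp [hC, Set.mem_iInter]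
    rw [hCeq]
    refine MeasurableSet.iInter fun m => ?_
    by_cases h : m ∈ S
    · simp only [h, iff_true]; exact hbase m
    · simp only [h, iff_false]; exact (hbase m).compl
  have hD'meas : MeasurableSet D' := by
    have hDeq : D' = ⋂ (a : Fin (n + 1)), ⋂ (b : Fin (n + 1)),
        {z | (z a).2 = y → (z b).2 = y → A z a = A z b → a = b} := by
      ext z
      simp only [hD', Set.mem_iInter, Set.mem_setOf_eq, Set.InjOn]
      constructor
      · intro h a b h1 h2 h3; exact h h1 h2 h3
      · intro h a h1 b h2 h3; exact h a b h1 h2 h3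
    rw [hDeq]
    refine MeasurableSet.iInter fun a => MeasurableSet.iInter fun b => ?_
    by_cases hab : a = b
    · have : {z : Fin (n + 1) → 𝓧 × 𝓨 |
          (z a).2 = y → (z b).2 = y → A z a = A z b → a = b} = Set.univ :=
        Set.eq_univ_of_forall fun z => fun _ _ _ => hab
      rw [this]; exact MeasurableSet.univ
    · have : {z : Fin (n + 1) → 𝓧 × 𝓨 |
          (z a).2 = y → (z b).2 = y → A z a = A z b → a = b}
          = (({z | (z a).2 = y} ∩ {z | (z b).2 = y}) ∩ {z | A z a = A z b})ᶜ := by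
        ext z
        simp only [Set.mem_compl_iff, Set.mem_inter_iff, Set.mem_setOf_eq]
        constructor
        · intro h hcon; exact hab (h hcon.1.1 hcon.1.2 hcon.2)
        · intro h h1 h2 h3; exact absurd ⟨⟨h1, h2⟩, h3⟩ h
      rw [this]
      exact (((hbase a).inter (hbase b)).inter
        (measurableSet_eq_fun (hAm a) (hAm b))).compl
  have hRmeas : ∀ (S : Finset (Fin (n + 1))) (i : Fin (n + 1)),
      MeasurableSet {z : Fin (n + 1) → 𝓧 × 𝓨 |
        (S.filter (fun m => A z m ≤ A z i)).card = j} := by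
    intro S i
    have hm : Measurable (fun z : Fin (n + 1) → 𝓧 × 𝓨 =>
        (S.filter (fun m => A z m ≤ A z i)).card) :=
      measurable_filter_card' S (fun m z => A z m ≤ A z i)
        (fun m _ => measurableSet_le (hAm m) (hAm i))
    exact hm (measurableSet_singleton j)
  have hBmeas : ∀ S i, MeasurableSet (B S i) :=
    fun S i => ((hCmeas S).inter hD'meas).inter (hRmeas S i)
  have hcount : Measurable (fun z : Fin (n + 1) → 𝓧 × 𝓨 =>
      (Finset.univ.filter (fun i => (z i).2 = y)).card) :=
    measurable_filter_card' _ (fun i (z : Fin (n + 1) → 𝓧 × 𝓨) => (z i).2 = y) (fun i _ => hbase i)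
  have hE'meas : MeasurableSet E' := by
    rw [hE', Set.setOf_and]
    exact (hbase lst).inter (hcount (measurableSet_singleton k))
  
  -- E is measurable and corresponds to E'
  have hEmeas : MeasurableSet E := by rw [hE]; exact hZvecMeas hE'meas
  -- the a.s. distinctness gives a null set
  have hnull : μ ((fun ω (i : Fin (n + 1)) => Z i ω) ⁻¹' (E' \ D')) = 0 := by
    have h0 := ae_iff.mp hdist
    refine measure_mono_null (fun ω hω => ?_) h0
    simp only [Set.mem_preimage, Set.mem_diff] at hω
    simp only [Set.mem_setOf_eq]
    intro hcon
    have hωE : ω ∈ E := by rw [hE]; exact hω.1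
    exact hω.2 (hcon hωE)
  -- labels of a configuration in C S
  have hlabel : ∀ (z : Fin (n + 1) → 𝓧 × 𝓨) S, z ∈ C S →
      Finset.univ.filter (fun i => (z i).2 = y) = S := by
    intro z S hz
    ext m
    simp only [Finset.mem_filter, Finset.mem_univ, true_and]
    exact hz m
  
  -- the key set identity
  have hkey : E' ∩ Pz ∩ D' = ⋃ S ∈ 𝒮, B S lst := by
    ext z
    simp only [hE', hPz, hD', hB, hC, Set.mem_inter_iff, Set.mem_setOf_eq,
      Set.mem_iUnion, exists_prop]
    constructor
    · rintro ⟨⟨⟨hzy, hzk⟩, hzP⟩, hzD⟩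
      refine ⟨Finset.univ.filter (fun i => (z i).2 = y), ?_, ?_⟩
      · rw [h𝒮, Finset.mem_filter]
        exact ⟨Finset.mem_univ _, Finset.mem_filter.2 ⟨Finset.mem_univ _, hzy⟩, hzk⟩
      · refine ⟨⟨fun m => ?_, hzD⟩, ?_⟩
        · simp [Finset.mem_filter]
        · have hnum : Finset.univ.filter (fun i : Fin (n + 1) =>
                (z i).2 = (z lst).2 ∧ A z i ≤ A z lst)
              = (Finset.univ.filter (fun i => (z i).2 = y)).filter
                  (fun m => A z m ≤ A z lst) := by
            rw [Finset.filter_filter, hzy]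
          have hden : Finset.univ.filter (fun i : Fin (n + 1) => (z i).2 = (z lst).2)
              = Finset.univ.filter (fun i => (z i).2 = y) := by rw [hzy]
          rw [hnum, hden, hzk] at hzP
          have hkR : ((k : ℝ)) ≠ 0 := Nat.cast_ne_zero.mpr (by omega)
          rw [div_eq_div_iff hkR hkR] at hzP
          exact_mod_cast mul_right_cancel₀ hkR hzP
    · rintro ⟨S, hS𝒮, hzB⟩
      rw [h𝒮, Finset.mem_filter] at hS𝒮
      obtain ⟨-, hlstS, hScard⟩ := hS𝒮
      obtain ⟨⟨hzC, hzD⟩, hzR⟩ := hzB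
      have hlab : Finset.univ.filter (fun i => (z i).2 = y) = S := by
        ext m
        simp only [Finset.mem_filter, Finset.mem_univ, true_and]
        exact hzC m
      have hzy : (z lst).2 = y := (hzC lst).mpr hlstS
      refine ⟨⟨⟨hzy, by rw [hlab]; exact hScard⟩, ?_⟩, hzD⟩
      have hden : Finset.univ.filter (fun i : Fin (n + 1) => (z i).2 = (z lst).2) = S := by
        rw [hzy, hlab]
      have hnum : Finset.univ.filter (fun i : Fin (n + 1) =>
            (z i).2 = (z lst).2 ∧ A z i ≤ A z lst)
          = S.filter (fun m => A z m ≤ A z lst) := by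
        rw [← Finset.filter_filter, hden]
      rw [hnum, hden, hzR, hScard]
  
  -- exchangeability: swapping i with lst preserves the measure of B S · j
  have hswap : ∀ S, lst ∈ S → ∀ i ∈ S, ν (B S i) = ν (B S lst) := by
    intro S hlstS i hiS
    set π := Equiv.swap i lst with hπdef
    have hππ : ∀ m, π (π m) = m := fun m => Equiv.swap_apply_self i lst m
    have hπlst : π lst = i := Equiv.swap_apply_right i lst
    have hπS : ∀ m, π m ∈ S ↔ m ∈ S := by
      have hfwd : ∀ m, m ∈ S → π m ∈ S := by
        intro m hm
        rcases eq_or_ne m i with rfl | h1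
        · rw [hπdef, Equiv.swap_apply_left]; exact hlstS
        · rcases eq_or_ne m lst with rfl | h2
          · rw [hπlst]; exact hiS
          · rw [hπdef, Equiv.swap_apply_of_ne_of_ne h1 h2]; exact hm
      intro m
      refine ⟨fun h => ?_, hfwd m⟩
      have := hfwd (π m) h
      rwa [hππ] at this
    have hgmeas : Measurable (fun (z : Fin (n + 1) → 𝓧 × 𝓨) m => z (π m)) :=
      measurable_pi_lambda _ fun m => measurable_pi_apply (π m)
    have hmap : ν.map (fun z m => z (π m)) = ν := by
      rw [hν, Measure.map_map hgmeas hZvecMeas]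
      have hco : ((fun (z : Fin (n + 1) → 𝓧 × 𝓨) m => z (π m)) ∘ fun ω i => Z i ω)
          = fun ω m => Z (π m) ω := rfl
      rw [hco]
      exact hexch π
    have hpre : (fun (z : Fin (n + 1) → 𝓧 × 𝓨) m => z (π m)) ⁻¹' (B S lst) = B S i := by
      ext z
      have hA := hequiv π z
      simp only [Set.mem_preimage, hB, hC, hD', Set.mem_inter_iff, Set.mem_setOf_eq, hA]
      rw [hπlst]
      have hcard : (S.filter fun m => A z (π m) ≤ A z i).card
          = (S.filter fun m => A z m ≤ A z i).card := by
        refine Finset.card_bij' (fun m _ => π m) (fun m _ => π m) ?_ ?_ ?_ ?_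
        · intro a ha
          rw [Finset.mem_filter] at ha ⊢
          exact ⟨(hπS a).mpr ha.1, ha.2⟩
        · intro a ha
          rw [Finset.mem_filter] at ha ⊢
          refine ⟨(hπS a).mpr ha.1, ?_⟩
          rw [hππ a]; exact ha.2
        · intro a _; exact hππ a
        · intro a _; exact hππ a
      constructor
      · rintro ⟨⟨h1, h2⟩, h3⟩
        refine ⟨⟨fun m => ?_, ?_⟩, ?_⟩
        · have hh := h1 (π m); rw [hππ m] at hh; exact hh.trans (hπS m)
        · exact (injOn_comp_perm' π (A z) {m | (z m).2 = y}).mp h2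
        · rw [← hcard]; exact h3
      · rintro ⟨⟨h1, h2⟩, h3⟩
        refine ⟨⟨fun m => (h1 (π m)).trans (hπS m), ?_⟩, ?_⟩
        · exact (injOn_comp_perm' π (A z) {m | (z m).2 = y}).mpr h2
        · rw [hcard]; exact h3
    calc ν (B S i) = ν ((fun (z : Fin (n + 1) → 𝓧 × 𝓨) m => z (π m)) ⁻¹' (B S lst)) := by
          rw [hpre]
      _ = ν.map (fun z m => z (π m)) (B S lst) :=
          (Measure.map_apply hgmeas (hBmeas S lst)).symm
      _ = ν (B S lst) := by rw [hmap]
  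
  -- partition of C S ∩ D' by the rank of the label-y scores
  have hCS : ∀ S, lst ∈ S → S.card = k →
      ν (C S ∩ D') = (k : ENNReal) * ν (B S lst) := by
    intro S hlstS hScard
    have hTS : ∀ z : Fin (n + 1) → 𝓧 × 𝓨, z ∈ C S →
        {m | (z m).2 = y} = (↑S : Set (Fin (n + 1))) := by
      intro z hz
      ext m
      exact (hz m).trans Finset.mem_coe.symm
    have hunion : C S ∩ D' = ⋃ i ∈ S, B S i := by
      ext z
      simp only [Set.mem_inter_iff, Set.mem_iUnion, exists_prop, hB, hC, hD',
        Set.mem_setOf_eq]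
      constructor
      · rintro ⟨hzC, hzD⟩
        have hinj : Set.InjOn (A z) ↑S := (hTS z hzC) ▸ hzD
        obtain ⟨i, hiS, hrank⟩ := rank_surj' S (A z) hinj j hj1
          (by rw [hScard]; exact hjk)
        exact ⟨i, hiS, ⟨hzC, hzD⟩, hrank⟩
      · rintro ⟨i, _, ⟨hzC, hzD⟩, -⟩
        exact ⟨hzC, hzD⟩
    have hdisj : (↑S : Set (Fin (n + 1))).PairwiseDisjoint (fun i => B S i) := by
      intro a ha b hb hab
      refine Set.disjoint_left.mpr fun z hza hzb => absurd ?_ hab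
      obtain ⟨⟨hzC, hzD⟩, hra⟩ := hza
      obtain ⟨-, hrb⟩ := hzb
      have hinj : Set.InjOn (A z) ↑S := (hTS z hzC) ▸ hzD
      exact rank_injOn' S (A z) hinj (Finset.mem_coe.mp ha) (Finset.mem_coe.mp hb)
        (hra.trans hrb.symm)
    rw [hunion, measure_biUnion_finset hdisj fun i _ => hBmeas S i,
      Finset.sum_congr rfl (fun i hi => hswap S hlstS i hi),
      Finset.sum_const, hScard, nsmul_eq_mul]
  -- partition of E' ∩ D' by the label set
  have hpart1 : E' ∩ D' = ⋃ S ∈ 𝒮, (C S ∩ D') := by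
    ext z
    simp only [hE', hD', hC, Set.mem_inter_iff, Set.mem_setOf_eq, Set.mem_iUnion,
      exists_prop]
    constructor
    · rintro ⟨⟨hzy, hzk⟩, hzD⟩
      refine ⟨Finset.univ.filter (fun i => (z i).2 = y), ?_, fun m => ?_, hzD⟩
      · rw [h𝒮, Finset.mem_filter]
        exact ⟨Finset.mem_univ _, Finset.mem_filter.2 ⟨Finset.mem_univ _, hzy⟩, hzk⟩
      · simp [Finset.mem_filter]
    · rintro ⟨S, hS, hzC, hzD⟩
      rw [h𝒮, Finset.mem_filter] at hS
      have hlab : Finset.univ.filter (fun i => (z i).2 = y) = S := by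
        ext m
        simp only [Finset.mem_filter, Finset.mem_univ, true_and]
        exact hzC m
      exact ⟨⟨(hzC lst).mpr hS.2.1, by rw [hlab]; exact hS.2.2⟩, hzD⟩
  have hνnull : ν (E' \ D') = 0 := by
    rw [hν, Measure.map_apply hZvecMeas (hE'meas.diff hD'meas)]
    exact hnull
  set U : Set (Fin (n + 1) → 𝓧 × 𝓨) := ⋃ S ∈ 𝒮, B S lst with hU
  have hUmeas : MeasurableSet U := by
    rw [hU]
    exact MeasurableSet.biUnion (Finset.countable_toSet 𝒮) fun S _ => hBmeas S lst
  have hdisj𝒮 : (↑𝒮 : Set (Finset (Fin (n + 1)))).PairwiseDisjoint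
      (fun S => B S lst) := by
    intro S hS S' hS' hne
    refine Set.disjoint_left.mpr fun z hz hz' => hne ?_
    obtain ⟨⟨hzC, -⟩, -⟩ := hz
    obtain ⟨⟨hzC', -⟩, -⟩ := hz'
    exact Finset.ext fun m => ((hzC m).symm.trans (hzC' m))
  have hdisj𝒮' : (↑𝒮 : Set (Finset (Fin (n + 1)))).PairwiseDisjoint
      (fun S => C S ∩ D') := by
    intro S hS S' hS' hne
    refine Set.disjoint_left.mpr fun z hz hz' => hne ?_
    obtain ⟨hzC, -⟩ := hz
    obtain ⟨hzC', -⟩ := hz'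
    exact Finset.ext fun m => ((hzC m).symm.trans (hzC' m))
  have hsumU : ν U = ∑ S ∈ 𝒮, ν (B S lst) := by
    rw [hU]
    exact measure_biUnion_finset hdisj𝒮 fun S _ => hBmeas S lst
  have hED : ν (E' ∩ D') = ∑ S ∈ 𝒮, ν (C S ∩ D') := by
    rw [hpart1]
    exact measure_biUnion_finset hdisj𝒮' fun S _ => (hCmeas S).inter hD'meas
  have hmem𝒮 : ∀ S ∈ 𝒮, lst ∈ S ∧ S.card = k := by
    intro S hS
    rw [h𝒮, Finset.mem_filter] at hS
    exact hS.2
  have hEU : ν E' = (k : ENNReal) * ν U := by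
    have h1 : ν E' = ν (E' ∩ D') := by
      have h2 := measure_inter_add_diff (μ := ν) E' hD'meas
      rw [hνnull, add_zero] at h2
      exact h2.symm
    rw [h1, hED, hsumU, Finset.mul_sum]
    exact Finset.sum_congr rfl fun S hS => hCS S (hmem𝒮 S hS).1 (hmem𝒮 S hS).2
  have hmuE : μ E = ν E' := by
    rw [hν, Measure.map_apply hZvecMeas hE'meas, hE]
    rfl
  -- pass to the conditional measure
  show μ[|E] ((fun ω (i : Fin (n + 1)) => Z i ω) ⁻¹' Pz) = (↑k : ENNReal)⁻¹
  rw [cond_apply hEmeas μ]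
  have hinter : μ (E ∩ ((fun ω (i : Fin (n + 1)) => Z i ω) ⁻¹' Pz)) = ν U := by
    have hae : ((E ∩ ((fun ω (i : Fin (n + 1)) => Z i ω) ⁻¹' Pz) : Set Ω))
        =ᵐ[μ] (((fun ω (i : Fin (n + 1)) => Z i ω) ⁻¹' U : Set Ω)) := by
      rw [ae_eq_set]
      constructor
      · refine measure_mono_null ?_ hnull
        intro ω hω
        obtain ⟨⟨hωE, hωP⟩, hωU⟩ := hω
        have hωE' : (fun i => Z i ω) ∈ E' := by rw [hE] at hωE; exact hωE
        refine ⟨hωE', fun hωD => hωU ?_⟩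
        have hmem : (fun i => Z i ω) ∈ E' ∩ Pz ∩ D' := ⟨⟨hωE', hωP⟩, hωD⟩
        rw [hkey] at hmem
        exact hmem
      · have hsub : ((fun ω (i : Fin (n + 1)) => Z i ω) ⁻¹' U)
            ⊆ E ∩ ((fun ω (i : Fin (n + 1)) => Z i ω) ⁻¹' Pz) := by
          intro ω hω
          have hmem : (fun i => Z i ω) ∈ E' ∩ Pz ∩ D' := by rw [hkey]; exact hω
          exact ⟨by rw [hE]; exact hmem.1.1, hmem.1.2⟩
        rw [Set.diff_eq_empty.mpr hsub]
        exact measure_empty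
    rw [measure_congr hae, hν, Measure.map_apply hZvecMeas hUmeas]
  rw [hinter, hmuE, hEU]
  have hx0 : ν U ≠ 0 := by
    intro h0
    exact hEpos (by rw [hmuE, hEU, h0, mul_zero])
  have hxt : ν U ≠ ⊤ := measure_ne_top ν U
  have hk0 : (k : ENNReal) ≠ 0 := Nat.cast_ne_zero.mpr (by omega)
  have hkt : (k : ENNReal) ≠ ⊤ := ENNReal.natCast_ne_top k
  rw [ENNReal.mul_inv (Or.inl hk0) (Or.inl hkt), mul_assoc,
    ENNReal.inv_mul_cancel hx0 hxt, mul_one]
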